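/- Let E, F, G be real Banach spaces, U ⊆ E and V ⊆ F open sets, and f : U × V → G a map which is analytic at every point of U × V. Let (a,b) ∈ U × V with f(a,b) = 0, and assume that the partial Fréchet derivative in the second variable D₂f(a,b) : F → G (the restriction of the total derivative Df(a,b) to the subspace {0} × F) is a topological linear isomorphism. Then there exist an open neighborhood U₀ ⊆ U of a and an analytic map g : U₀ → V such that g(a) = b and f(x, g(x)) = 0 for all x ∈ U₀. -/

import Mathlib

/-- analytic implicit function theorem: if `f : U × V → G` is
analytic at every point, `f (a, b) = 0`, and the partial derivative of `f` at
`(a, b)` in the second variable is a topological linear isomorphism `F ≃ G`,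
then near `a` there is an analytic map `g` with `g a = b` and `f (x, g x) = 0`. -/
theorem analytic_implicit_function_theorem
    {E F G : Type*} [NormedAddCommGroup E] [NormedSpace ℝ E] [CompleteSpace E]
    [NormedAddCommGroup F] [NormedSpace ℝ F] [CompleteSpace F]
    [NormedAddCommGroup G] [NormedSpace ℝ G] [CompleteSpace G]
    (U : Set E) (V : Set F) (hU : IsOpen U) (hV : IsOpen V)
    (f : E × F → G) (hf : ∀ p ∈ U ×ˢ V, AnalyticAt ℝ f p)
    (a : E) (b : F) (ha : a ∈ U) (hb : b ∈ V) (hab : f (a, b) = 0)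
    (hiso : ∃ L : F ≃L[ℝ] G, ∀ w : F, L w = fderiv ℝ f (a, b) (0, w)) :
    ∃ U₀ : Set E, IsOpen U₀ ∧ a ∈ U₀ ∧ U₀ ⊆ U ∧
      ∃ g : E → F, g a = b ∧
        (∀ x ∈ U₀, g x ∈ V) ∧
        (∀ x ∈ U₀, f (x, g x) = 0) ∧
        (∀ x ∈ U₀, AnalyticAt ℝ g x) := by
  obtain ⟨L, hL⟩ := hiso
  have hfab : AnalyticAt ℝ f (a, b) := hf (a, b) ⟨ha, hb⟩
  set Df : E × F →L[ℝ] G := fderiv ℝ f (a, b) with hDf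
  -- the map Φ (x, y) = (x, f (x, y))
  set Φ : E × F → E × G := fun p => (p.1, f p) with hΦdef
  have hΦa : AnalyticAt ℝ Φ (a, b) :=
    (analyticAt_fst).prod hfab
  have hΦab : Φ (a, b) = (a, 0) := by simp [hΦdef, hab]
  -- derivative of f splits
  have hsplit : ∀ u v, Df (u, v) = Df (u, 0) + Df (0, v) := by
    intro u v
    have : (u, v) = (u, 0) + ((0 : E), v) := by simp
    rw [this, map_add]
  -- the derivative of Φ as a continuous linear equivalence
  let T : E × F →L[ℝ] E × G := (ContinuousLinearMap.fst ℝ E F).prod Df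
  let Tinv : E × G →L[ℝ] E × F := (ContinuousLinearMap.fst ℝ E G).prod
    ((L.symm : G →L[ℝ] F).comp ((ContinuousLinearMap.snd ℝ E G) -
      (Df.comp ((ContinuousLinearMap.inl ℝ E F).comp (ContinuousLinearMap.fst ℝ E G)))))
  have hTinvT : ∀ p : E × F, Tinv (T p) = p := by
    rintro ⟨u, v⟩
    simp only [T, Tinv, ContinuousLinearMap.prod_apply, ContinuousLinearMap.coe_fst',
      ContinuousLinearMap.coe_comp', Function.comp_apply, ContinuousLinearMap.sub_apply,
      ContinuousLinearMap.coe_snd', ContinuousLinearMap.inl_apply]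
    refine Prod.ext rfl ?_
    have : Df (u, v) - Df (u, 0) = Df (0, v) := by rw [hsplit u v]; abel
    rw [this, ← hL v]
    simp
  have hTTinv : ∀ q : E × G, T (Tinv q) = q := by
    rintro ⟨u, w⟩
    simp only [T, Tinv, ContinuousLinearMap.prod_apply, ContinuousLinearMap.coe_fst',
      ContinuousLinearMap.coe_comp', Function.comp_apply, ContinuousLinearMap.sub_apply,
      ContinuousLinearMap.coe_snd', ContinuousLinearMap.inl_apply]
    refine Prod.ext rfl ?_
    show Df (u, L.symm (w - Df ((u, 0) : E × F))) = w
    have key : Df (0, (L.symm (w - Df ((u, 0) : E × F)))) = w - Df ((u, 0) : E × F) := by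
      rw [← hL (L.symm (w - Df ((u, 0) : E × F)))]
      simp
    rw [hsplit u (L.symm (w - Df ((u, 0) : E × F))), key]
    abel
  let Teq : (E × F) ≃L[ℝ] (E × G) := ContinuousLinearEquiv.equivOfInverse T Tinv hTinvT hTTinv
  have hΦ' : HasFDerivAt Φ (Teq : E × F →L[ℝ] E × G) (a, b) := by
    have h1 : HasFDerivAt (fun p : E × F => p.1) (ContinuousLinearMap.fst ℝ E F) (a, b) :=
      hasFDerivAt_fst
    have h2 : HasFDerivAt f Df (a, b) := hfab.differentiableAt.hasFDerivAt
    exact h1.prodMk h2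
  have hΦc : ContDiffAt ℝ (⊤ : WithTop ℕ∞) Φ (a, b) := hΦa.contDiffAt
  have hn : (⊤ : WithTop ℕ∞) ≠ 0 := by simp
  -- the local inverse Ψ
  set Ψ : E × G → E × F := hΦc.localInverse hΦ' hn with hΨdef
  have hΨab : Ψ (a, 0) = (a, b) := by
    rw [← hΦab]; exact hΦc.localInverse_apply_image hΦ' hn
  have hΨan : AnalyticAt ℝ Ψ (a, 0) := by
    have := (hΦc.to_localInverse hΦ' hn).analyticAt
    rwa [hΦab] at this
  have hri : ∀ᶠ q in nhds ((a, 0) : E × G), Φ (Ψ q) = q := by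
    have := (hΦc.hasStrictFDerivAt' hΦ' hn).eventually_right_inverse
    rwa [show Φ (a, b) = ((a, 0) : E × G) from hΦab] at this
  -- define g
  set g : E → F := fun x => (Ψ (x, 0)).2 with hgdef
  have hga : g a = b := by simp [hgdef, hΨab]
  have hincl : ContinuousAt (fun x : E => ((x, 0) : E × G)) a :=
    (continuous_id.prodMk continuous_const).continuousAt
  -- eventual properties near a
  have h1 : ∀ᶠ x in nhds a, Φ (Ψ (x, 0)) = (x, 0) := hincl.eventually hri
  have h2 : ∀ᶠ x in nhds a, AnalyticAt ℝ g x := by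
    filter_upwards [hincl.eventually hΨan.eventually_analyticAt] with x hx
    have hin : AnalyticAt ℝ (fun y : E => ((y, 0) : E × G)) x :=
      (analyticAt_id).prod analyticAt_const
    have hcomp : AnalyticAt ℝ (fun y : E => Ψ (y, 0)) x :=
      AnalyticAt.comp (f := fun y : E => ((y, 0) : E × G)) hx hin
    have hsnd : AnalyticAt ℝ (Prod.snd : E × F → F) (Ψ (x, 0)) := analyticAt_snd
    exact AnalyticAt.comp (g := (Prod.snd : E × F → F)) (f := fun y : E => Ψ (y, 0)) hsnd hcomp
  have hgc : ContinuousAt g a := by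
    have hcomp : ContinuousAt (fun y : E => Ψ (y, 0)) a :=
      ContinuousAt.comp (g := Ψ) (f := fun y : E => ((y, 0) : E × G)) hΨan.continuousAt hincl
    exact ContinuousAt.comp (f := fun y : E => Ψ (y, 0)) continuousAt_snd hcomp
  have h3 : ∀ᶠ x in nhds a, g x ∈ V := hgc (by rw [hga]; exact hV.mem_nhds hb)
  have h4 : ∀ᶠ x in nhds a, x ∈ U := hU.mem_nhds ha
  have hall := h1.and (h2.and (h3.and h4))
  obtain ⟨t, ht, hto, hta⟩ := eventually_nhds_iff.mp hall
  refine ⟨t, hto, hta, fun x hx => (ht x hx).2.2.2, g, hga,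
    fun x hx => (ht x hx).2.2.1, fun x hx => ?_, fun x hx => (ht x hx).2.1⟩
  have h := (ht x hx).1
  have h1' : (Ψ (x, 0)).1 = x := congrArg Prod.fst h
  have h2' : f (Ψ (x, 0)) = 0 := congrArg Prod.snd h
  have : ((x : E), g x) = Ψ (x, 0) := by
    rw [hgdef]; exact Prod.ext h1'.symm rfl
  rw [this, h2']
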